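/- Let F be a finite field of order q, let V be an F-vector space of dimension n ≥ 2, and let G₀ ≤ GL(V) act transitively on the nonzero vectors of V. Let G = V ⋊ G₀ act 2-transitively on V by (v,g)·w = v + g(w), and let ψ be the irreducible character of G with 1 + ψ the permutation character of this action. Let W < V be a hyperplane, S = {g ∈ G₀ : g(W) = W}, and H = W⋊S ≤ G. Then ⟨ψ, Ind_H^G(1_H)⟩ = 1, i.e., ψ occurs with multiplicity exactly one in the character of G induced from the trivial character of H. -/

import Mathlib

open scoped Classical

/-- The affine group `G = V ⋊ G₀` attached to a subgroup `G₀ ≤ GL(V)`: the group of affine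
equivalences `w ↦ v + g(w)` of `V` with `v ∈ V` and linear part `g ∈ G₀`. -/
def affGroup {F V : Type*} [Field F] [AddCommGroup V] [Module F V]
    (G₀ : Subgroup (V ≃ₗ[F] V)) : Subgroup (V ≃ᵃ[F] V) :=
  G₀.comap (AffineEquiv.linearHom : (V ≃ᵃ[F] V) →* V ≃ₗ[F] V)

/-- For the 2-transitive action of `G = V ⋊ G₀` on `V`, the function `ψ(g) = fix(g) − 1`;
`1 + ψ` is the permutation character and `ψ` is its irreducible part. -/
noncomputable def affPsi {F V : Type*} [Field F] [AddCommGroup V] [Module F V]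
    (G₀ : Subgroup (V ≃ₗ[F] V)) (e : affGroup G₀) : ℂ :=
  (Nat.card {w : V | (e : V ≃ᵃ[F] V) w = w} : ℂ) - 1

/-- The character of `G = V ⋊ G₀` induced from the trivial character of (the subgroup with
underlying set) `H`: `Ind_H^G(1_H)(g) = (1/|H|) Σ_{x ∈ G} 1_H(x⁻¹ g x)`. -/
noncomputable def affIndTrivial {F V : Type*} [Field F] [AddCommGroup V] [Module F V]
    (G₀ : Subgroup (V ≃ₗ[F] V)) (H : Set (affGroup G₀)) (g : affGroup G₀) : ℂ :=
  (Nat.card H : ℂ)⁻¹ * ∑ᶠ x : affGroup G₀, if x⁻¹ * g * x ∈ H then 1 else 0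

/-- The standard inner product of class functions on the finite group `G = V ⋊ G₀`. -/
noncomputable def affClassInner {F V : Type*} [Field F] [AddCommGroup V] [Module F V]
    (G₀ : Subgroup (V ≃ₗ[F] V)) (a b : affGroup G₀ → ℂ) : ℂ :=
  (Nat.card (affGroup G₀) : ℂ)⁻¹ * ∑ᶠ g : affGroup G₀, a g * (starRingEnd ℂ) (b g)

/-! ### Auxiliary material -/

section AuxCounting

open MulAction

variable {K X : Type*} [Group K] [Fintype K] [MulAction K X] [Fintype X]

lemma auxSumFix :
    ∑ k : K, Nat.card {x : X // k • x = x} = ∑ x : X, Nat.card (stabilizer K x) := by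
  have h1 : ∀ k : K, Nat.card {x : X // k • x = x}
      = (Finset.univ.filter (fun x : X => k • x = x)).card := fun k => by
    rw [Nat.card_eq_fintype_card, Fintype.card_subtype]
  have h2 : ∀ x : X, Nat.card (stabilizer K x)
      = (Finset.univ.filter (fun k : K => k • x = x)).card := fun x => by
    rw [Nat.card_congr (Equiv.subtypeEquivRight (fun k => mem_stabilizer_iff)),
      Nat.card_eq_fintype_card, Fintype.card_subtype]
  simp only [h1, h2, Finset.card_filter]
  exact Finset.sum_comm

lemma auxSumStabOrbit (x : X) :
    ∑ y ∈ (orbit K x).toFinset, Nat.card (stabilizer K y) = Fintype.card K := by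
  have hpos : 0 < Fintype.card (orbit K x) :=
    Fintype.card_pos_iff.mpr ⟨⟨x, mem_orbit_self x⟩⟩
  have hc : ∀ y ∈ (orbit K x).toFinset,
      Nat.card (stabilizer K y) = Fintype.card K / Fintype.card (orbit K x) := by
    intro y hy
    rw [Set.mem_toFinset] at hy
    have hoy : orbit K y = orbit K x := orbit_eq_iff.mpr hy
    have h : Nat.card (orbit K y) * Nat.card (stabilizer K y) = Nat.card K := by
      simpa [Nat.card_eq_fintype_card] using card_orbit_mul_card_stabilizer_eq_card_group K y
    rw [hoy] at h
    simp only [Nat.card_eq_fintype_card] at h ⊢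
    exact (Nat.div_eq_of_eq_mul_left hpos (by rw [← h, mul_comm])).symm
  rw [Finset.sum_congr rfl hc, Finset.sum_const, smul_eq_mul, Set.toFinset_card]
  have hdvd : Fintype.card (orbit K x) ∣ Fintype.card K :=
    ⟨Fintype.card (stabilizer K x), (card_orbit_mul_card_stabilizer_eq_card_group K x).symm⟩
  exact Nat.mul_div_cancel' hdvd

end AuxCounting

instance auxDualMulAction (F V : Type*) [Field F] [AddCommGroup V] [Module F V] :
    MulAction (V ≃ₗ[F] V) (Module.Dual F V) where
  smul g φ := φ.comp (g.symm : V →ₗ[F] V)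
  one_smul φ := by ext v; rfl
  mul_smul g h φ := by ext v; rfl

lemma auxDualSmul_def {F V : Type*} [Field F] [AddCommGroup V] [Module F V]
    (g : V ≃ₗ[F] V) (φ : Module.Dual F V) : g • φ = φ.comp (g.symm : V →ₗ[F] V) := rfl

instance auxAffMulAction (F V : Type*) [Field F] [AddCommGroup V] [Module F V] :
    MulAction (V ≃ᵃ[F] V) V where
  smul e v := e v
  one_smul _ := rfl
  mul_smul _ _ _ := rfl

section AuxLinear

variable {F V : Type*} [Field F] [Fintype F] [AddCommGroup V] [Module F V] [Fintype V]

lemma auxFixCardDual (g : V ≃ₗ[F] V) :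
    Nat.card {φ : Module.Dual F V // g • φ = φ} = Nat.card {v : V // g v = v} := by
  haveI : Module.Finite F V := Module.Finite.of_finite
  haveI : Finite (Module.Dual F V) :=
    Finite.of_injective (fun φ => (φ : V → F)) DFunLike.coe_injective
  set f : V →ₗ[F] V := (g : V →ₗ[F] V) - LinearMap.id with hf
  have e1 : {v : V // g v = v} ≃ LinearMap.ker f :=
    Equiv.subtypeEquivRight (fun v => by
      simp [hf, LinearMap.sub_apply, sub_eq_zero, LinearMap.mem_ker])
  have e2 : {φ : Module.Dual F V // g • φ = φ} ≃ LinearMap.ker f.dualMap := by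
    refine Equiv.subtypeEquivRight (fun φ => ?_)
    rw [LinearMap.mem_ker, auxDualSmul_def]
    constructor
    · intro h
      ext v
      have h1 := LinearMap.congr_fun h (g v)
      simp [hf] at h1 ⊢
      simp [h1]
    · intro h
      ext v
      have h1 := LinearMap.congr_fun h (g.symm v)
      simp [hf] at h1 ⊢
      exact (sub_eq_zero.mp h1).symm
  rw [Nat.card_congr e1, Nat.card_congr e2]
  have hrk : Module.finrank F (LinearMap.ker f.dualMap) = Module.finrank F (LinearMap.ker f) := by
    have h1 := LinearMap.finrank_range_add_finrank_ker f
    have h2 := LinearMap.finrank_range_add_finrank_ker f.dualMap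
    rw [LinearMap.finrank_range_dualMap_eq_finrank_range, Subspace.dual_finrank_eq] at h2
    omega
  haveI : Fintype (Module.Dual F V) := Fintype.ofFinite _
  haveI : Fintype (LinearMap.ker f.dualMap) := Fintype.ofFinite _
  haveI : Fintype (LinearMap.ker f) := Fintype.ofFinite _
  rw [Nat.card_eq_fintype_card, Nat.card_eq_fintype_card,
    Module.card_eq_pow_finrank (K := F) (V := LinearMap.ker f.dualMap),
    Module.card_eq_pow_finrank (K := F) (V := LinearMap.ker f), hrk]

lemma auxDualTransitive (hn : 2 ≤ Module.finrank F V) (G₀ : Subgroup (V ≃ₗ[F] V))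
    (htrans : ∀ v w : V, v ≠ 0 → w ≠ 0 → ∃ g ∈ G₀, g v = w)
    (φ ψ : Module.Dual F V) (hφ : φ ≠ 0) (hψ : ψ ≠ 0) :
    ∃ g : G₀, g • φ = ψ := by
  haveI : Finite (V ≃ₗ[F] V) :=
    Finite.of_injective (fun e => (e : V → V)) DFunLike.coe_injective
  haveI : Fintype G₀ := Fintype.ofFinite _
  haveI : Finite (Module.Dual F V) :=
    Finite.of_injective (fun ρ => (ρ : V → F)) DFunLike.coe_injective
  haveI : Fintype (Module.Dual F V) := Fintype.ofFinite _
  haveI : Module.Finite F V := Module.Finite.of_finite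
  obtain ⟨v₁, hv₁⟩ : ∃ v : V, v ≠ 0 := by
    have hpos : 0 < Module.finrank F V := by omega
    obtain ⟨v, hv⟩ := Module.finrank_pos_iff_exists_ne_zero.mp hpos
    exact ⟨v, hv⟩
  have hzeroV : Nat.card (MulAction.stabilizer G₀ (0 : V)) = Fintype.card G₀ := by
    have h : MulAction.stabilizer G₀ (0 : V) = ⊤ := by
      ext g
      simp only [MulAction.mem_stabilizer_iff, Subgroup.mem_top, iff_true, Subgroup.smul_def,
        LinearEquiv.smul_def, map_zero]
    rw [h, Subgroup.card_top, Nat.card_eq_fintype_card]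
  have horbV : MulAction.orbit G₀ v₁ = {v : V | v ≠ 0} := by
    ext w
    constructor
    · rintro ⟨g, rfl⟩
      intro h0
      exact hv₁ ((g : V ≃ₗ[F] V).map_eq_zero_iff.mp h0)
    · intro hw
      obtain ⟨g, hg, hgv⟩ := htrans v₁ w hv₁ hw
      exact ⟨⟨g, hg⟩, hgv⟩
  have hsumV : ∑ g : G₀, Nat.card {v : V // g • v = v} = 2 * Fintype.card G₀ := by
    rw [auxSumFix]
    have hmemV : (0 : V) ∈ Finset.univ := Finset.mem_univ _
    rw [← Finset.sum_erase_add Finset.univ _ hmemV, hzeroV]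
    have he : Finset.univ.erase (0 : V) = (MulAction.orbit G₀ v₁).toFinset := by
      ext x
      simp [horbV, Finset.mem_erase]
    rw [he, auxSumStabOrbit]
    ring
  have hsumD : ∑ g : G₀, Nat.card {ρ : Module.Dual F V // g • ρ = ρ}
      = 2 * Fintype.card G₀ := by
    rw [← hsumV]
    refine Finset.sum_congr rfl (fun g _ => ?_)
    exact auxFixCardDual (g : V ≃ₗ[F] V)
  by_contra hcon
  push_neg at hcon
  have hψφ : ψ ∉ MulAction.orbit G₀ φ := by
    rintro ⟨g, rfl⟩
    exact hcon g rfl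
  have horb_ne : ∀ ρ : Module.Dual F V, ρ ≠ 0 → ∀ x ∈ MulAction.orbit G₀ ρ, x ≠ 0 := by
    rintro ρ hρ x ⟨g, rfl⟩ h0
    apply hρ
    ext v
    have h1 : ρ.comp (((g : V ≃ₗ[F] V)).symm : V →ₗ[F] V) = 0 := h0
    have h2 := LinearMap.congr_fun h1 ((g : V ≃ₗ[F] V) v)
    simpa using h2
  have hzeroD : Nat.card (MulAction.stabilizer G₀ (0 : Module.Dual F V))
      = Fintype.card G₀ := by
    have h : MulAction.stabilizer G₀ (0 : Module.Dual F V) = ⊤ := by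
      ext g
      simp only [MulAction.mem_stabilizer_iff, Subgroup.smul_def, auxDualSmul_def,
        Subgroup.mem_top, iff_true]
      ext v
      simp
    rw [h, Subgroup.card_top, Nat.card_eq_fintype_card]
  have htot : ∑ x : Module.Dual F V, Nat.card (MulAction.stabilizer G₀ x)
      = 2 * Fintype.card G₀ := by rw [← auxSumFix]; exact hsumD
  have hmemD : (0 : Module.Dual F V) ∈ Finset.univ := Finset.mem_univ _
  rw [← Finset.sum_erase_add Finset.univ _ hmemD, hzeroD] at htot
  have hrest : ∑ x ∈ Finset.univ.erase (0 : Module.Dual F V),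
      Nat.card (MulAction.stabilizer G₀ x) = Fintype.card G₀ := by omega
  set A := (MulAction.orbit G₀ φ).toFinset with hA
  set B := (MulAction.orbit G₀ ψ).toFinset with hB
  have hdisj : Disjoint A B := by
    rw [Finset.disjoint_left]
    intro x hxA hxB
    rw [hA, Set.mem_toFinset] at hxA
    rw [hB, Set.mem_toFinset] at hxB
    apply hψφ
    have h1 : MulAction.orbit G₀ x = MulAction.orbit G₀ φ := MulAction.orbit_eq_iff.mpr hxA
    have h2 : MulAction.orbit G₀ x = MulAction.orbit G₀ ψ := MulAction.orbit_eq_iff.mpr hxB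
    rw [← h1, h2]
    exact MulAction.mem_orbit_self ψ
  have hsub : A ∪ B ⊆ Finset.univ.erase 0 := by
    intro x hx
    rw [Finset.mem_union] at hx
    rw [Finset.mem_erase]
    refine ⟨?_, Finset.mem_univ _⟩
    rcases hx with hx | hx
    · rw [hA, Set.mem_toFinset] at hx; exact horb_ne φ hφ x hx
    · rw [hB, Set.mem_toFinset] at hx; exact horb_ne ψ hψ x hx
  have hAB : ∑ x ∈ A ∪ B, Nat.card (MulAction.stabilizer G₀ x) = 2 * Fintype.card G₀ := by
    rw [Finset.sum_union hdisj, hA, hB, auxSumStabOrbit, auxSumStabOrbit]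
    ring
  have hle := Finset.sum_le_sum_of_subset (f := fun x => Nat.card (MulAction.stabilizer G₀ x)) hsub
  rw [hAB, hrest] at hle
  have hposG : 0 < Fintype.card G₀ := Fintype.card_pos
  omega

lemma auxHyperFunc (W : Submodule F V) (hW : Module.finrank F W + 1 = Module.finrank F V) :
    ∃ φ : Module.Dual F V, ∀ v : V, v ∈ W ↔ φ v = 0 := by
  haveI : Module.Finite F V := Module.Finite.of_finite
  have hq : Module.finrank F (V ⧸ W) = 1 := by
    have := Submodule.finrank_quotient_add_finrank W
    omega
  obtain ⟨e⟩ : Nonempty ((V ⧸ W) ≃ₗ[F] F) :=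
    FiniteDimensional.nonempty_linearEquiv_of_finrank_eq (by rw [hq, Module.finrank_self])
  refine ⟨(e : (V ⧸ W) →ₗ[F] F).comp W.mkQ, fun v => ?_⟩
  simp [LinearMap.comp_apply, Submodule.mkQ_apply, LinearEquiv.map_eq_zero_iff,
    Submodule.Quotient.mk_eq_zero]

lemma auxScale (hn : 2 ≤ Module.finrank F V) (G₀ : Subgroup (V ≃ₗ[F] V))
    (htrans : ∀ v w : V, v ≠ 0 → w ≠ 0 → ∃ g ∈ G₀, g v = w)
    (W : Submodule F V) (hW : Module.finrank F W + 1 = Module.finrank F V)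
    {v v' : V} (hv : v ∉ W) (hv' : v' ∉ W) :
    ∃ g : G₀, ((g : V ≃ₗ[F] V) '' (W : Set V) = (W : Set V))
      ∧ v' - (g : V ≃ₗ[F] V) v ∈ W := by
  haveI : Module.Finite F V := Module.Finite.of_finite
  obtain ⟨φ₀, hφ₀⟩ := auxHyperFunc W hW
  have hv0 : φ₀ v ≠ 0 := fun h => hv ((hφ₀ v).mpr h)
  have hv'0 : φ₀ v' ≠ 0 := fun h => hv' ((hφ₀ v').mpr h)
  set c : F := φ₀ v' * (φ₀ v)⁻¹ with hc
  have hcne : c ≠ 0 := mul_ne_zero hv'0 (inv_ne_zero hv0)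
  set φ₁ : Module.Dual F V := c • φ₀ with hφ₁
  have hφ₁v : φ₁ v = φ₀ v' := by
    rw [hφ₁, LinearMap.smul_apply, smul_eq_mul, hc]
    field_simp
  have hφ₀ne : φ₀ ≠ 0 := fun h => hv0 (by rw [h]; rfl)
  have hφ₁ne : φ₁ ≠ 0 := fun h => hv'0 (by rw [← hφ₁v, h]; rfl)
  obtain ⟨g, hg⟩ := auxDualTransitive hn G₀ htrans φ₁ φ₀ hφ₁ne hφ₀ne
  have hkey : ∀ u : V, φ₀ ((g : V ≃ₗ[F] V) u) = φ₁ u := by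
    intro u
    have h1 : φ₁.comp (((g : V ≃ₗ[F] V)).symm : V →ₗ[F] V) = φ₀ := hg
    have h2 := LinearMap.congr_fun h1 ((g : V ≃ₗ[F] V) u)
    simpa using h2.symm
  have hle : W.map ((g : V ≃ₗ[F] V) : V →ₗ[F] V) ≤ W := by
    rintro _ ⟨w, hw, rfl⟩
    have hw0 : φ₀ w = 0 := (hφ₀ w).mp hw
    refine (hφ₀ _).mpr ?_
    have := hkey w
    simp only [LinearEquiv.coe_coe]
    rw [this, hφ₁, LinearMap.smul_apply, smul_eq_mul, hw0, mul_zero]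
  have hfr : Module.finrank F (W.map ((g : V ≃ₗ[F] V) : V →ₗ[F] V)) = Module.finrank F W :=
    (LinearEquiv.finrank_eq (W.equivMapOfInjective _ (g : V ≃ₗ[F] V).injective)).symm
  have heq : W.map ((g : V ≃ₗ[F] V) : V →ₗ[F] V) = W :=
    Submodule.eq_of_le_of_finrank_le hle (by rw [hfr])
  refine ⟨g, ?_, ?_⟩
  · have := congrArg (fun U : Submodule F V => (U : Set V)) heq
    simpa [Submodule.map_coe] using this
  · refine (hφ₀ _).mpr ?_
    rw [map_sub, hkey v, hφ₁v, sub_self]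

end AuxLinear

section HSide

variable {F V : Type*} [Field F] [AddCommGroup V] [Module F V]

lemma auxDecomp (e : V ≃ᵃ[F] V) (u : V) : e u = e.linear u + e 0 := by
  have := e.map_vadd 0 u
  simpa [vadd_eq_add] using this

lemma auxPreim (l : V ≃ₗ[F] V) (W : Submodule F V) (h : ⇑l '' (W : Set V) = (W : Set V))
    {x : V} (hx : l x ∈ W) : x ∈ W := by
  have hx' : l x ∈ (⇑l '' (W : Set V)) := by rw [h]; exact hx
  obtain ⟨w, hw, he⟩ := hx'
  rwa [← l.injective he]

/-- `H = W ⋊ S` as a subgroup of `affGroup G₀`. -/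
def auxH (G₀ : Subgroup (V ≃ₗ[F] V)) (W : Submodule F V) : Subgroup (affGroup G₀) where
  carrier := {e : affGroup G₀ | (e : V ≃ᵃ[F] V) 0 ∈ W ∧
      (e : V ≃ᵃ[F] V).linear '' (W : Set V) = (W : Set V)}
  one_mem' := by
    constructor
    · simpa using W.zero_mem
    · have h1 : ((1 : affGroup G₀) : V ≃ᵃ[F] V).linear = LinearEquiv.refl F V := rfl
      rw [h1]
      exact Set.image_id _
  mul_mem' := by
    rintro a b ⟨ha0, haW⟩ ⟨hb0, hbW⟩
    have hco : ((a * b : affGroup G₀) : V ≃ᵃ[F] V) = (a : V ≃ᵃ[F] V) * (b : V ≃ᵃ[F] V) := rfl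
    constructor
    · rw [hco]
      rw [show ((a : V ≃ᵃ[F] V) * (b : V ≃ᵃ[F] V)) 0 = (a : V ≃ᵃ[F] V) ((b : V ≃ᵃ[F] V) 0)
        from rfl]
      rw [auxDecomp (a : V ≃ᵃ[F] V) ((b : V ≃ᵃ[F] V) 0)]
      refine W.add_mem ?_ ha0
      have hmem : (a : V ≃ᵃ[F] V).linear ((b : V ≃ᵃ[F] V) 0)
          ∈ (⇑(a : V ≃ᵃ[F] V).linear '' (W : Set V)) := ⟨_, hb0, rfl⟩
      rw [haW] at hmem
      exact hmem
    · have hlin : ⇑((a * b : affGroup G₀) : V ≃ᵃ[F] V).linear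
          = ⇑(a : V ≃ᵃ[F] V).linear ∘ ⇑(b : V ≃ᵃ[F] V).linear := rfl
      rw [hlin, Set.image_comp, hbW, haW]
  inv_mem' := by
    rintro a ⟨ha0, haW⟩
    set A := (a : V ≃ᵃ[F] V) with hA
    have hco : ((a⁻¹ : affGroup G₀) : V ≃ᵃ[F] V) = A.symm := rfl
    have hlin : A.symm.linear = A.linear.symm := AffineEquiv.linear_symm A
    have hWinv : ⇑A.linear.symm '' (W : Set V) = (W : Set V) := by
      calc ⇑A.linear.symm '' (W : Set V) = ⇑A.linear.symm '' (⇑A.linear '' (W : Set V)) := by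
            rw [haW]
        _ = (W : Set V) := by
            rw [← Set.image_comp]
            have hid : (⇑A.linear.symm ∘ ⇑A.linear) = id := by
              funext u; exact A.linear.symm_apply_apply u
            rw [hid, Set.image_id]
    constructor
    · show A.symm 0 ∈ W
      have h1 : A.linear (A.symm 0) + A 0 = 0 := by
        rw [← auxDecomp A (A.symm 0)]
        exact A.apply_symm_apply 0
      have h2 : A.linear (A.symm 0) ∈ W := by
        have h3 : A.linear (A.symm 0) = -(A 0) := by
          rw [eq_neg_iff_add_eq_zero]; exact h1
        rw [h3]; exact W.neg_mem ha0
      exact auxPreim A.linear W haW h2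
    · show ⇑A.symm.linear '' (W : Set V) = (W : Set V)
      rw [hlin]
      exact hWinv

lemma auxFixConj (G₀ : Subgroup (V ≃ₗ[F] V)) (x g : affGroup G₀) :
    Nat.card {w : V | ((x * g * x⁻¹ : affGroup G₀) : V ≃ᵃ[F] V) w = w}
      = Nat.card {w : V | (g : V ≃ᵃ[F] V) w = w} := by
  apply Nat.card_congr
  have happ : ∀ w : V, ((x * g * x⁻¹ : affGroup G₀) : V ≃ᵃ[F] V) w
      = (x : V ≃ᵃ[F] V) ((g : V ≃ᵃ[F] V) ((x : V ≃ᵃ[F] V).symm w)) := fun w => rfl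
  refine Equiv.subtypeEquiv ((x : V ≃ᵃ[F] V).toEquiv.symm) (fun w => ?_)
  simp only [Set.mem_setOf_eq]
  have heq : ((x : V ≃ᵃ[F] V).toEquiv.symm w) = (x : V ≃ᵃ[F] V).symm w := rfl
  rw [heq, happ w]
  constructor
  · intro h
    have h2 := congrArg (x : V ≃ᵃ[F] V).symm h
    simpa using h2
  · intro h
    rw [h]
    exact (x : V ≃ᵃ[F] V).apply_symm_apply w

end HSide

section HOrbits

variable {F V : Type*} [Field F] [Fintype F] [AddCommGroup V] [Module F V] [Fintype V]
variable (G₀ : Subgroup (V ≃ₗ[F] V)) (W : Submodule F V)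

omit [Fintype F] [Fintype V] in
lemma auxHpres (h : auxH G₀ W) {u : V} (hu : u ∈ W) :
    ((h : affGroup G₀) : V ≃ᵃ[F] V) u ∈ W := by
  obtain ⟨h0, hWim⟩ := h.2
  rw [auxDecomp]
  refine W.add_mem ?_ h0
  have hmem : ((h : affGroup G₀) : V ≃ᵃ[F] V).linear u
      ∈ (⇑((h : affGroup G₀) : V ≃ᵃ[F] V).linear '' (W : Set V)) := ⟨u, hu, rfl⟩
  rw [hWim] at hmem
  exact hmem

omit [Fintype F] [Fintype V] in
lemma auxOrbW (v : V) (hv : v ∈ W) :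
    MulAction.orbit (auxH G₀ W) v = (W : Set V) := by
  ext w
  constructor
  · rintro ⟨h, rfl⟩
    exact auxHpres G₀ W h hv
  · intro hw
    have hw' : w ∈ W := hw
    have he_aff : AffineEquiv.constVAdd F V (w - v) ∈ affGroup G₀ := by
      have h1 : AffineEquiv.linearHom (AffineEquiv.constVAdd F V (w - v))
          = (1 : V ≃ₗ[F] V) := rfl
      show AffineEquiv.linearHom (AffineEquiv.constVAdd F V (w - v)) ∈ G₀
      rw [h1]
      exact G₀.one_mem
    have ht : (⟨AffineEquiv.constVAdd F V (w - v), he_aff⟩ : affGroup G₀) ∈ auxH G₀ W := by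
      constructor
      · show AffineEquiv.constVAdd F V (w - v) 0 ∈ W
        rw [AffineEquiv.constVAdd_apply]
        simpa using W.sub_mem hw' hv
      · show ⇑(AffineEquiv.constVAdd F V (w - v)).linear '' (W : Set V) = (W : Set V)
        have hid : ⇑(AffineEquiv.constVAdd F V (w - v)).linear = id := rfl
        rw [hid, Set.image_id]
    refine ⟨⟨⟨AffineEquiv.constVAdd F V (w - v), he_aff⟩, ht⟩, ?_⟩
    show AffineEquiv.constVAdd F V (w - v) v = w
    rw [AffineEquiv.constVAdd_apply]
    simp [vadd_eq_add]

lemma auxOrbC (hn : 2 ≤ Module.finrank F V)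
    (htrans : ∀ v w : V, v ≠ 0 → w ≠ 0 → ∃ g ∈ G₀, g v = w)
    (hW : Module.finrank F W + 1 = Module.finrank F V)
    (v : V) (hv : v ∉ W) :
    MulAction.orbit (auxH G₀ W) v = ((W : Set V))ᶜ := by
  ext v'
  constructor
  · rintro ⟨h, rfl⟩
    intro hmem
    have hmem' : ((h : affGroup G₀) : V ≃ᵃ[F] V) v ∈ W := hmem
    have h2 := auxHpres G₀ W h⁻¹ hmem'
    have h3 : (((h⁻¹ : (auxH G₀ W)) : affGroup G₀) : V ≃ᵃ[F] V)
        (((h : affGroup G₀) : V ≃ᵃ[F] V) v) = v :=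
      AffineEquiv.symm_apply_apply ((h : affGroup G₀) : V ≃ᵃ[F] V) v
    rw [h3] at h2
    exact hv h2
  · intro hv'
    have hv'' : v' ∉ W := hv'
    obtain ⟨g, hgW, hgv⟩ := auxScale hn G₀ htrans W hW hv hv''
    set e : V ≃ᵃ[F] V :=
      AffineEquiv.constVAdd F V (v' - (g : V ≃ₗ[F] V) v)
        * ((g : V ≃ₗ[F] V).toAffineEquiv) with he
    have happ : ∀ u : V, e u = (v' - (g : V ≃ₗ[F] V) v) + (g : V ≃ₗ[F] V) u := fun u => rfl
    have hlin : AffineEquiv.linearHom e = (g : V ≃ₗ[F] V) := by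
      ext u; rfl
    have he_aff : e ∈ affGroup G₀ := by
      show AffineEquiv.linearHom e ∈ G₀
      rw [hlin]
      exact g.2
    have hlin2 : ⇑(e.linear) = ⇑(g : V ≃ₗ[F] V) := by funext u; rfl
    have ht : (⟨e, he_aff⟩ : affGroup G₀) ∈ auxH G₀ W := by
      constructor
      · show e 0 ∈ W
        rw [happ 0]
        simpa using hgv
      · show ⇑e.linear '' (W : Set V) = (W : Set V)
        rw [hlin2]
        exact hgW
    refine ⟨⟨⟨e, he_aff⟩, ht⟩, ?_⟩
    show e v = v'
    rw [happ v]
    abel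

omit [Fintype F] in
lemma auxExistsNotMem (hW : Module.finrank F W + 1 = Module.finrank F V) :
    ∃ v : V, v ∉ W := by
  by_contra hall
  push_neg at hall
  have h : W = ⊤ := Submodule.eq_top_iff'.mpr hall
  rw [h, finrank_top] at hW
  omega

lemma auxSumFixH [Fintype (V ≃ᵃ[F] V)]
    (hn : 2 ≤ Module.finrank F V)
    (htrans : ∀ v w : V, v ≠ 0 → w ≠ 0 → ∃ g ∈ G₀, g v = w)
    (hW : Module.finrank F W + 1 = Module.finrank F V) :
    ∑ h : (auxH G₀ W), Nat.card {w : V | ((h : affGroup G₀) : V ≃ᵃ[F] V) w = w}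
      = 2 * Fintype.card (auxH G₀ W) := by
  have hconv : ∀ h : (auxH G₀ W),
      Nat.card {w : V | ((h : affGroup G₀) : V ≃ᵃ[F] V) w = w}
        = Nat.card {x : V // h • x = x} := fun h =>
    Nat.card_congr (Equiv.subtypeEquivRight (fun x => Iff.rfl))
  simp only [hconv]
  rw [auxSumFix]
  obtain ⟨v₁, hv₁⟩ := auxExistsNotMem W hW
  rw [← Finset.sum_filter_add_sum_filter_not Finset.univ (fun x : V => x ∈ W)]
  have h1 : Finset.univ.filter (fun x : V => x ∈ W)
      = (MulAction.orbit (auxH G₀ W) (0 : V)).toFinset := by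
    ext x
    simp [auxOrbW G₀ W 0 W.zero_mem]
  have h2 : Finset.univ.filter (fun x : V => ¬ x ∈ W)
      = (MulAction.orbit (auxH G₀ W) v₁).toFinset := by
    ext x
    simp [auxOrbC G₀ W hn htrans hW v₁ hv₁]
  rw [h1, h2, auxSumStabOrbit, auxSumStabOrbit]
  ring

end HOrbits

/-- Let `F` be a finite field of order `q`, `V` an `F`-vector space of dimension `n ≥ 2`,
`G₀ ≤ GL(V)` transitive on nonzero vectors, `G = V ⋊ G₀` acting 2-transitively on `V` by
`(v,g)·w = v + g(w)`, and `ψ` the irreducible character with `1 + ψ` the permutation character.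
Let `W < V` be a hyperplane, `S = {g ∈ G₀ : g(W) = W}` and `H = W⋊S ≤ G`.  Then
`⟨ψ, Ind_H^G(1_H)⟩ = 1`. -/
theorem affine_psi_multiplicity_one {F V : Type*} [Field F] [Fintype F]
    [AddCommGroup V] [Module F V] [Fintype V]
    (hn : 2 ≤ Module.finrank F V)
    (G₀ : Subgroup (V ≃ₗ[F] V))
    (htrans : ∀ v w : V, v ≠ 0 → w ≠ 0 → ∃ g ∈ G₀, g v = w)
    (W : Submodule F V) (hW : Module.finrank F W + 1 = Module.finrank F V)
    (H : Set (affGroup G₀))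
    (hH : H = {e : affGroup G₀ | (e : V ≃ᵃ[F] V) 0 ∈ W ∧
      (e : V ≃ᵃ[F] V).linear '' (W : Set V) = (W : Set V)}) :
    affClassInner G₀ (affPsi G₀) (affIndTrivial G₀ H) = 1 := by
  classical
  haveI : Finite (V ≃ᵃ[F] V) :=
    Finite.of_injective (fun e => (e : V → V)) DFunLike.coe_injective
  haveI : Fintype (V ≃ᵃ[F] V) := Fintype.ofFinite _
  have hHmem : ∀ x : affGroup G₀, x ∈ H ↔ x ∈ auxH G₀ W := by
    intro x; rw [hH]; exact Iff.rfl
  have hcardH : Nat.card H = Fintype.card (auxH G₀ W) := by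
    rw [Nat.card_congr (Equiv.subtypeEquivRight hHmem), Nat.card_eq_fintype_card]
  have hfixH := auxSumFixH G₀ W hn htrans hW
  set N : ℕ := Nat.card (affGroup G₀) with hN
  set M : ℕ := Fintype.card (auxH G₀ W) with hM
  have hNpos : 0 < N := Nat.card_pos
  have hMpos : 0 < M := Fintype.card_pos
  have hN0 : (N : ℂ) ≠ 0 := Nat.cast_ne_zero.mpr hNpos.ne'
  have hM0 : (M : ℂ) ≠ 0 := Nat.cast_ne_zero.mpr hMpos.ne'
  -- conjugate of the induced character
  have hind : ∀ g : affGroup G₀, (starRingEnd ℂ) (affIndTrivial G₀ H g)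
      = ((M : ℂ))⁻¹ * ∑ x : affGroup G₀,
          (if x⁻¹ * g * x ∈ auxH G₀ W then (1 : ℂ) else 0) := by
    intro g
    unfold affIndTrivial
    rw [finsum_eq_sum_of_fintype, hcardH]
    rw [map_mul, map_inv₀, map_natCast, map_sum]
    congr 1
    refine Finset.sum_congr rfl (fun x _ => ?_)
    simp only [apply_ite (starRingEnd ℂ), map_one, map_zero, hHmem]
  -- the inner sum over the subgroup
  have hsum3 : ∑ g : affGroup G₀,
      affPsi G₀ g * (if g ∈ auxH G₀ W then (1 : ℂ) else 0) = (M : ℂ) := by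
    simp only [mul_ite, mul_one, mul_zero]
    rw [← Finset.sum_filter]
    rw [Finset.sum_subtype (p := fun g => g ∈ auxH G₀ W) _ (fun x => by simp)
      (fun g => affPsi G₀ g)]
    unfold affPsi
    rw [Finset.sum_sub_distrib, ← Nat.cast_sum]
    rw [hfixH]
    simp only [Finset.sum_const, Finset.card_univ, nsmul_eq_mul, mul_one]
    push_cast
    ring
  -- conjugation invariance
  have hconj : ∀ x g : affGroup G₀, affPsi G₀ (x * g * x⁻¹) = affPsi G₀ g := by
    intro x g
    unfold affPsi
    rw [auxFixConj]
  -- reindexing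
  have hsum2 : ∀ x : affGroup G₀,
      ∑ g : affGroup G₀, affPsi G₀ g * (if x⁻¹ * g * x ∈ auxH G₀ W then (1 : ℂ) else 0)
        = (M : ℂ) := by
    intro x
    rw [← hsum3]
    rw [← Equiv.sum_comp ((Equiv.mulRight x⁻¹).trans (Equiv.mulLeft x))
      (fun g => affPsi G₀ g * (if x⁻¹ * g * x ∈ auxH G₀ W then (1 : ℂ) else 0))]
    refine Finset.sum_congr rfl (fun g _ => ?_)
    have he : ((Equiv.mulRight x⁻¹).trans (Equiv.mulLeft x)) g = x * g * x⁻¹ := by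
      simp [Equiv.mulRight, Equiv.mulLeft, mul_assoc]
    rw [he]
    have harg : x⁻¹ * (x * g * x⁻¹) * x = g := by group
    rw [harg, hconj x g]
  -- main computation
  unfold affClassInner
  rw [finsum_eq_sum_of_fintype]
  have hstep : ∑ g : affGroup G₀, affPsi G₀ g * (starRingEnd ℂ) (affIndTrivial G₀ H g)
      = (M : ℂ)⁻¹ * ((N : ℂ) * (M : ℂ)) := by
    calc ∑ g : affGroup G₀, affPsi G₀ g * (starRingEnd ℂ) (affIndTrivial G₀ H g)
        = ∑ g : affGroup G₀, (M : ℂ)⁻¹ * ∑ x : affGroup G₀,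
            affPsi G₀ g * (if x⁻¹ * g * x ∈ auxH G₀ W then (1 : ℂ) else 0) := by
          refine Finset.sum_congr rfl (fun g _ => ?_)
          rw [hind g, ← Finset.mul_sum]
          ring
      _ = (M : ℂ)⁻¹ * ∑ g : affGroup G₀, ∑ x : affGroup G₀,
            affPsi G₀ g * (if x⁻¹ * g * x ∈ auxH G₀ W then (1 : ℂ) else 0) := by
          rw [Finset.mul_sum]
      _ = (M : ℂ)⁻¹ * ∑ x : affGroup G₀, ∑ g : affGroup G₀,
            affPsi G₀ g * (if x⁻¹ * g * x ∈ auxH G₀ W then (1 : ℂ) else 0) := by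
          rw [Finset.sum_comm]
      _ = (M : ℂ)⁻¹ * ∑ _x : affGroup G₀, (M : ℂ) := by
          rw [Finset.sum_congr rfl (fun x _ => hsum2 x)]
      _ = (M : ℂ)⁻¹ * ((N : ℂ) * (M : ℂ)) := by
          rw [Finset.sum_const, Finset.card_univ, nsmul_eq_mul, hN, Nat.card_eq_fintype_card]
  rw [hstep]
  field_simp
  rw [hN, Nat.card_eq_fintype_card]
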